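/- Let d ≥ 1 and let s be a point of the unit sphere 𝕊^d ⊂ ℝ^{d+1} with −1 < s_{d+1} < 1. Set θ = s[1:d]/‖s[1:d]‖ ∈ 𝕊^{d−1} ⊂ ℝ^d and t = s_{d+1}/√(1 − s_{d+1}²). Then for every s' ∈ 𝕊^d with s'_{d+1} < 1, one has ⟨s', s⟩ = s_{d+1} if and only if ⟨φ(s'), θ⟩ = t. In other words, the stereographic projection maps the subsphere ζ₁^s = { s' ∈ 𝕊^d : ⟨s', s⟩ = s_{d+1} } bijectively onto the hyperplane { x ∈ ℝ^d : ⟨x, θ⟩ = t }. -/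

import Mathlib

open Real
open scoped RealInnerProductSpace

noncomputable section

/-- The first `d` coordinates of a point of `ℝ^{d+1}`, i.e. `s[1:d]`. -/
def stereoProj {d : ℕ} (s : EuclideanSpace ℝ (Fin (d + 1))) : EuclideanSpace ℝ (Fin d) :=
  WithLp.toLp 2 (fun i => s (Fin.castSucc i))

/-- The stereographic projection `φ(s) = s[1:d] / (1 - s_{d+1})`. -/
def stereo {d : ℕ} (s : EuclideanSpace ℝ (Fin (d + 1))) : EuclideanSpace ℝ (Fin d) :=
  (1 - s (Fin.last d))⁻¹ • stereoProj s

open Classical in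
/-- The map `h₁(x) = arccos((1 - ‖x‖²)/(1 + ‖x‖²)) • x/‖x‖` for `x ≠ 0`, `h₁(0) = 0`. -/
def h1 {d : ℕ} (x : EuclideanSpace ℝ (Fin d)) : EuclideanSpace ℝ (Fin d) :=
  if x = 0 then 0 else Real.arccos ((1 - ‖x‖ ^ 2) / (1 + ‖x‖ ^ 2)) • ‖x‖⁻¹ • x

/-- The north pole `s_n = (0, …, 0, 1)` of `𝕊^d ⊂ ℝ^{d+1}`. -/
def northPole (d : ℕ) : EuclideanSpace ℝ (Fin (d + 1)) :=
  EuclideanSpace.single (Fin.last d) 1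

/-- The south pole `s₀ = (0, …, 0, -1)` of `𝕊^d ⊂ ℝ^{d+1}`. -/
def southPole (d : ℕ) : EuclideanSpace ℝ (Fin (d + 1)) :=
  EuclideanSpace.single (Fin.last d) (-1)

end

/-- for `s ∈ 𝕊^d` with `-1 < s_{d+1} < 1`, setting `θ = s[1:d]/‖s[1:d]‖` and
`t = s_{d+1}/√(1 - s_{d+1}²)`, the stereographic projection maps the subsphere
`{s' ∈ 𝕊^d : ⟨s', s⟩ = s_{d+1}}` onto the hyperplane `{x : ⟨x, θ⟩ = t}`:
for every `s' ∈ 𝕊^d ∖ {s_n}`, `⟨s', s⟩ = s_{d+1} ↔ ⟨φ(s'), θ⟩ = t`. -/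
theorem stmt10 {d : ℕ} (hd : 1 ≤ d) (s : EuclideanSpace ℝ (Fin (d + 1)))
    (hs : ‖s‖ = 1) (hgt : -1 < s (Fin.last d)) (hlt : s (Fin.last d) < 1) :
    ∀ s' : EuclideanSpace ℝ (Fin (d + 1)), ‖s'‖ = 1 → s' (Fin.last d) < 1 →
      (⟪s', s⟫ = s (Fin.last d) ↔
        ⟪stereo s', ‖stereoProj s‖⁻¹ • stereoProj s⟫ =
          s (Fin.last d) / Real.sqrt (1 - s (Fin.last d) ^ 2)) := by
  intro s' hs' hlt'
  have ha := hlt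
  set a := s (Fin.last d) with haa
  set a' := s' (Fin.last d) with haa'
  have hpos' : (0:ℝ) < 1 - a' := by linarith
  have h1a : (0:ℝ) < 1 - a ^ 2 := by nlinarith
  have normsq : ∀ z : EuclideanSpace ℝ (Fin (d+1)), ‖z‖ ^ 2 = ∑ i, z i ^ 2 := by
    intro z
    rw [EuclideanSpace.norm_eq, Real.sq_sqrt (by positivity)]
    simp [Real.norm_eq_abs, sq_abs]
  have hnorm : ‖stereoProj s‖ ^ 2 = 1 - a ^ 2 := by
    have h1 : ‖s‖ ^ 2 = ∑ i, s i ^ 2 := normsq s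
    rw [hs] at h1
    have h2 : ‖stereoProj s‖ ^ 2 = ∑ i : Fin d, s (Fin.castSucc i) ^ 2 := by
      rw [EuclideanSpace.norm_eq, Real.sq_sqrt (by positivity)]
      simp [stereoProj, Real.norm_eq_abs, sq_abs]
    rw [Fin.sum_univ_castSucc] at h1
    rw [h2]; rw [← haa] at h1; linarith
  have hNpos : (0:ℝ) < ‖stereoProj s‖ := by
    have := hnorm; nlinarith [norm_nonneg (stereoProj s)]
  have hsqrt : Real.sqrt (1 - a ^ 2) = ‖stereoProj s‖ := by
    rw [← hnorm, Real.sqrt_sq hNpos.le]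
  have hinner : ⟪s', s⟫ = ⟪stereoProj s', stereoProj s⟫ + a' * a := by
    simp only [PiLp.inner_apply, RCLike.inner_apply, conj_trivial]
    rw [Fin.sum_univ_castSucc]
    rw [mul_comm a' a]
    rfl
  have hinner2 : ⟪stereo s', ‖stereoProj s‖⁻¹ • stereoProj s⟫ =
      (1 - a')⁻¹ * (‖stereoProj s‖⁻¹ * ⟪stereoProj s', stereoProj s⟫) := by
    rw [stereo, real_inner_smul_left, real_inner_smul_right]
  set I := ⟪stereoProj s', stereoProj s⟫
  set N := ‖stereoProj s‖
  rw [hinner, hinner2, hsqrt]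
  constructor
  · intro h
    have hI : I = a * (1 - a') := by linarith
    rw [hI]; field_simp
  · intro h
    have hI : I = a * (1 - a') := by
      field_simp at h
      nlinarith [h]
    linarith [hI]
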